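/- arXiv:2008.08249 — 4 statements merged into one kernel-verified Lean document; each statement's English description precedes it below -/
import Mathlib

section
/- For every real q > 0, all natural numbers d, m ≥ 1, every x, a ∈ ℝ^d and every d×m real matrix A, the following pointwise inequality holds: (1+|x|²)^{q/2−2}·[(1+|x|²)·(2⟨x,a⟩ + |A|²) + (q−2)·|Aᵀx|²] ≤ (1+|x|²)^{q/2−1}·(2⟨x,a⟩ + max(q−1,1)·|A|²), where |Aᵀx| denotes the Euclidean norm of the vector Aᵀx ∈ ℝ^m. -/
open scoped RealInnerProductSpace

/-- Frobenius (Hilbert–Schmidt) norm of a real matrix. -/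
noncomputable def frobNorm {n k : ℕ} (A : Matrix (Fin n) (Fin k) ℝ) : ℝ :=
  Real.sqrt (∑ i, ∑ j, (A i j) ^ 2)

/-- Matrix–vector product, producing an element of Euclidean space. -/
noncomputable def mvec {n k : ℕ} (A : Matrix (Fin n) (Fin k) ℝ)
    (v : EuclideanSpace ℝ (Fin k)) : EuclideanSpace ℝ (Fin n) :=
  (EuclideanSpace.equiv (Fin n) ℝ).symm (A.mulVec (EuclideanSpace.equiv (Fin k) ℝ v))

lemma key_cs {d m : ℕ} (x : EuclideanSpace ℝ (Fin d)) (A : Matrix (Fin d) (Fin m) ℝ) :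
    ‖mvec A.transpose x‖ ^ 2 ≤ frobNorm A ^ 2 * ‖x‖ ^ 2 := by
  have hx : ‖x‖ ^ 2 = ∑ i, (x i) ^ 2 := by
    rw [EuclideanSpace.norm_eq, Real.sq_sqrt (by positivity)]
    simp [sq_abs]
  have hA : frobNorm A ^ 2 = ∑ i, ∑ j, (A i j) ^ 2 := by
    rw [frobNorm, Real.sq_sqrt (by positivity)]
  have hAx : ‖mvec A.transpose x‖ ^ 2 = ∑ j, (∑ i, A i j * x i) ^ 2 := by
    rw [EuclideanSpace.norm_eq, Real.sq_sqrt (by positivity)]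
    simp [mvec, Matrix.mulVec, dotProduct, Real.norm_eq_abs, sq_abs,
      Matrix.transpose_apply]
  rw [hx, hA, hAx, Finset.sum_comm, Finset.sum_mul]
  apply Finset.sum_le_sum
  intro j _
  exact Finset.sum_mul_sq_le_sq_mul_sq _ _ _

theorem stmt0 (q : ℝ) (hq : 0 < q) (d m : ℕ) (hd : 1 ≤ d) (hm : 1 ≤ m)
    (x a : EuclideanSpace ℝ (Fin d)) (A : Matrix (Fin d) (Fin m) ℝ) :
    (1 + ‖x‖ ^ 2) ^ (q / 2 - 2) *
        ((1 + ‖x‖ ^ 2) * (2 * ⟪x, a⟫ + frobNorm A ^ 2)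
          + (q - 2) * ‖mvec A.transpose x‖ ^ 2)
      ≤ (1 + ‖x‖ ^ 2) ^ (q / 2 - 1) *
          (2 * ⟪x, a⟫ + max (q - 1) 1 * frobNorm A ^ 2) := by
  have hS : (0:ℝ) < 1 + ‖x‖ ^ 2 := by positivity
  have hpow : (1 + ‖x‖ ^ 2) ^ (q / 2 - 1)
      = (1 + ‖x‖ ^ 2) ^ (q / 2 - 2) * (1 + ‖x‖ ^ 2) := by
    rw [show q/2-1 = (q/2-2)+1 by ring, Real.rpow_add hS, Real.rpow_one]
  rw [hpow]
  have hP : (0:ℝ) < (1 + ‖x‖ ^ 2) ^ (q / 2 - 2) := Real.rpow_pos_of_pos hS _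
  rw [mul_assoc]
  apply mul_le_mul_of_nonneg_left _ hP.le
  have hcs := key_cs x A
  have hAx : (0:ℝ) ≤ ‖mvec A.transpose x‖ ^ 2 := sq_nonneg _
  have hF : (0:ℝ) ≤ frobNorm A ^ 2 := sq_nonneg _
  rcases le_total q 2 with h | h
  · rw [max_eq_right (by linarith)]
    nlinarith
  · rw [max_eq_left (by linarith)]
    nlinarith
end

section
/- Suppose f and g satisfy condition (H2) with parameters q > 0, K₁ ≥ 0, K₂ ≥ 0 and V₁. Define, for x, y ∈ ℝ^d, LU(x,y) := (q/2)·(1+|x|²)^{q/2−2}·[(1+|x|²)·(2⟨x, f(x,y)⟩ + |g(x,y)|²) + (q−2)·|g(x,y)ᵀx|²] (this equals ⟨f(x,y), ∇U(x)⟩ + ½⟨g(x,y), ∇²U(x)·g(x,y)⟩ for U(x) = (1+|x|²)^{q/2}). Then for all x, y ∈ ℝ^d: LU(x,y) ≤ (q/2)·K₁·(1+|x|^q+|y|^q) − (q/2)·K₂·(V₁(x) − V₁(y)). -/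
open scoped RealInnerProductSpace

theorem stmt1 (d m : ℕ) (hd : 1 ≤ d) (hm : 1 ≤ m)
    (f : EuclideanSpace ℝ (Fin d) → EuclideanSpace ℝ (Fin d) → EuclideanSpace ℝ (Fin d))
    (g : EuclideanSpace ℝ (Fin d) → EuclideanSpace ℝ (Fin d) → Matrix (Fin d) (Fin m) ℝ)
    (q K₁ K₂ : ℝ) (hq : 0 < q) (hK₁ : 0 ≤ K₁) (hK₂ : 0 ≤ K₂)
    (V₁ : EuclideanSpace ℝ (Fin d) → ℝ) (hV₁ : ∀ x, 0 ≤ V₁ x)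
    (hH2 : ∀ x y : EuclideanSpace ℝ (Fin d),
      (1 + ‖x‖ ^ 2) ^ (q / 2 - 1) *
          (2 * ⟪x, f x y⟫ + max (q - 1) 1 * frobNorm (g x y) ^ 2)
        ≤ K₁ * (1 + ‖x‖ ^ q + ‖y‖ ^ q) - K₂ * (V₁ x - V₁ y)) :
    ∀ x y : EuclideanSpace ℝ (Fin d),
      (q / 2) * ((1 + ‖x‖ ^ 2) ^ (q / 2 - 2) *
          ((1 + ‖x‖ ^ 2) * (2 * ⟪x, f x y⟫ + frobNorm (g x y) ^ 2)
            + (q - 2) * ‖mvec (g x y).transpose x‖ ^ 2))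
        ≤ (q / 2) * K₁ * (1 + ‖x‖ ^ q + ‖y‖ ^ q) - (q / 2) * K₂ * (V₁ x - V₁ y) := by
  intro x y
  set A := g x y with hA
  set S := 2 * ⟪x, f x y⟫ with hS
  have hFsq : frobNorm A ^ 2 = ∑ i, ∑ j, (A i j) ^ 2 := by
    rw [frobNorm, Real.sq_sqrt]
    exact Finset.sum_nonneg fun i _ => Finset.sum_nonneg fun j _ => sq_nonneg _
  have hF0 : 0 ≤ frobNorm A ^ 2 := sq_nonneg _
  have hxsq : ‖x‖ ^ 2 = ∑ i, (x i) ^ 2 := by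
    rw [EuclideanSpace.norm_eq, Real.sq_sqrt]
    · simp [sq_abs]
    · exact Finset.sum_nonneg fun i _ => sq_nonneg _
  -- Cauchy-Schwarz bound on ‖Aᵀ x‖²
  have hG : ‖mvec A.transpose x‖ ^ 2 ≤ frobNorm A ^ 2 * ‖x‖ ^ 2 := by
    have hnorm : ‖mvec A.transpose x‖ ^ 2 = ∑ j, (∑ i, A i j * x i) ^ 2 := by
      rw [EuclideanSpace.norm_eq, Real.sq_sqrt]
      · congr 1; funext j
        simp [mvec, Matrix.mulVec, dotProduct, Matrix.transpose, sq_abs]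
      · exact Finset.sum_nonneg fun i _ => sq_nonneg _
    rw [hnorm, hFsq, hxsq, Finset.sum_comm]
    calc ∑ j, (∑ i, A i j * x i) ^ 2
        ≤ ∑ j, (∑ i, (A i j) ^ 2) * ∑ i, (x i) ^ 2 :=
          Finset.sum_le_sum fun j _ =>
            Finset.sum_mul_sq_le_sq_mul_sq _ (fun i => A i j) x
      _ = (∑ j, ∑ i, (A i j) ^ 2) * ∑ i, (x i) ^ 2 := by rw [Finset.sum_mul]
  set a := 1 + ‖x‖ ^ 2 with ha
  have ha1 : (1:ℝ) ≤ a := by nlinarith [sq_nonneg ‖x‖]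
  have ha0 : (0:ℝ) < a := lt_of_lt_of_le one_pos ha1
  have hxa : ‖x‖ ^ 2 ≤ a := by nlinarith
  have hpow : a ^ (q / 2 - 1) = a ^ (q / 2 - 2) * a := by
    rw [show q / 2 - 1 = (q / 2 - 2) + 1 by ring, Real.rpow_add ha0, Real.rpow_one]
  have hpow0 : (0:ℝ) ≤ a ^ (q / 2 - 2) := le_of_lt (Real.rpow_pos_of_pos ha0 _)
  have key : a * frobNorm A ^ 2 + (q - 2) * ‖mvec A.transpose x‖ ^ 2
      ≤ max (q - 1) 1 * (a * frobNorm A ^ 2) := by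
    rcases le_or_gt q 2 with hq2 | hq2
    · have h1 : (q - 2) * ‖mvec A.transpose x‖ ^ 2 ≤ 0 :=
        mul_nonpos_of_nonpos_of_nonneg (by linarith) (sq_nonneg _)
      have h2 : a * frobNorm A ^ 2 ≤ max (q - 1) 1 * (a * frobNorm A ^ 2) := by
        have := le_max_right (q - 1) (1:ℝ)
        nlinarith [mul_nonneg (le_of_lt ha0) hF0]
      linarith
    · have hmax : max (q - 1) 1 = q - 1 := max_eq_left (by linarith)
      have h1 : (q - 2) * ‖mvec A.transpose x‖ ^ 2 ≤ (q - 2) * (frobNorm A ^ 2 * a) := by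
        apply mul_le_mul_of_nonneg_left _ (by linarith)
        calc ‖mvec A.transpose x‖ ^ 2 ≤ frobNorm A ^ 2 * ‖x‖ ^ 2 := hG
          _ ≤ frobNorm A ^ 2 * a := mul_le_mul_of_nonneg_left hxa hF0
      rw [hmax]; nlinarith
  have main : a ^ (q / 2 - 2) *
        (a * (S + frobNorm A ^ 2) + (q - 2) * ‖mvec A.transpose x‖ ^ 2)
      ≤ a ^ (q / 2 - 1) * (S + max (q - 1) 1 * frobNorm A ^ 2) := by
    rw [hpow]
    have : a * (S + frobNorm A ^ 2) + (q - 2) * ‖mvec A.transpose x‖ ^ 2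
        ≤ a * (S + max (q - 1) 1 * frobNorm A ^ 2) := by nlinarith
    calc a ^ (q / 2 - 2) *
          (a * (S + frobNorm A ^ 2) + (q - 2) * ‖mvec A.transpose x‖ ^ 2)
        ≤ a ^ (q / 2 - 2) * (a * (S + max (q - 1) 1 * frobNorm A ^ 2)) :=
          mul_le_mul_of_nonneg_left this hpow0
      _ = a ^ (q / 2 - 2) * a * (S + max (q - 1) 1 * frobNorm A ^ 2) := by ring
  have hfinal := le_trans main (hH2 x y)
  have hq2 : (0:ℝ) ≤ q / 2 := by positivity
  calc (q / 2) * (a ^ (q / 2 - 2) *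
        (a * (S + frobNorm A ^ 2) + (q - 2) * ‖mvec A.transpose x‖ ^ 2))
      ≤ (q / 2) * (K₁ * (1 + ‖x‖ ^ q + ‖y‖ ^ q) - K₂ * (V₁ x - V₁ y)) :=
        mul_le_mul_of_nonneg_left hfinal hq2
    _ = (q / 2) * K₁ * (1 + ‖x‖ ^ q + ‖y‖ ^ q) - (q / 2) * K₂ * (V₁ x - V₁ y) := by ring
end

section
/- For every β > 0 and all x, x̄, y, ȳ ∈ ℝ: |x−x̄|·( 2(x−x̄)·((x − 8x³) − (x̄ − 8x̄³)) + β·(|y|^{3/2} − |ȳ|^{3/2})² ) ≤ (2 + β³/3)·|x−x̄|³ + (16/3)·|y−ȳ|³ − 8·|x−x̄|³·(x² + x̄²) + 8·|y−ȳ|³·(y² + ȳ²). -/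
/-- `u^(3/2) = (√u)^3` for `u ≥ 0`. -/
lemma rpow_three_halves (u : ℝ) (hu : 0 ≤ u) :
    u ^ ((3 : ℝ) / 2) = Real.sqrt u ^ 3 := by
  rw [Real.sqrt_eq_rpow, ← Real.rpow_natCast (u ^ ((1 : ℝ)/2)) 3, ← Real.rpow_mul hu]
  norm_num

/-- Key cube estimate: if `0 ≤ b ≤ a` and `a² − b² ≤ d` then
`(a³−b³)³ ≤ 8 d³ (1 + a⁴ + b⁴)`. -/
lemma cube_est (a b d : ℝ) (ha : 0 ≤ a) (hb : 0 ≤ b) (hd : 0 ≤ d)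
    (hba : b ≤ a) (h : a ^ 2 - b ^ 2 ≤ d) :
    (a ^ 3 - b ^ 3) ^ 3 ≤ 8 * d ^ 3 * (1 + a ^ 4 + b ^ 4) := by
  have h0 : 0 ≤ a ^ 3 - b ^ 3 := by nlinarith [pow_le_pow_left₀ hb hba 3]
  have h1 : a ^ 3 - b ^ 3 ≤ 2 * d * a := by
    nlinarith [mul_nonneg (sub_nonneg.2 hba) (mul_nonneg ha hb),
      mul_le_mul_of_nonneg_left h (by positivity : (0:ℝ) ≤ 2 * a),
      mul_nonneg (sub_nonneg.2 hba) (sq_nonneg (a - b))]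
  have h2 : (a ^ 3 - b ^ 3) ^ 3 ≤ (2 * d * a) ^ 3 := pow_le_pow_left₀ h0 h1 3
  have h4 : a ^ 3 ≤ 1 + a ^ 4 + b ^ 4 := by
    nlinarith [sq_nonneg (a ^ 2 - a), sq_nonneg (a - 1), sq_nonneg a, pow_nonneg hb 4]
  calc (a ^ 3 - b ^ 3) ^ 3 ≤ (2 * d * a) ^ 3 := h2
    _ = 8 * d ^ 3 * a ^ 3 := by ring
    _ ≤ 8 * d ^ 3 * (1 + a ^ 4 + b ^ 4) := by
        apply mul_le_mul_of_nonneg_left h4 (by positivity)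

/-- Young's inequality `p q² ≤ p³/3 + 2q³/3` for nonnegative reals. -/
lemma young_pq (p q : ℝ) (hp : 0 ≤ p) (hq : 0 ≤ q) :
    p * q ^ 2 ≤ p ^ 3 / 3 + 2 * q ^ 3 / 3 := by
  nlinarith [mul_nonneg (sq_nonneg (p - q)) (by linarith : (0:ℝ) ≤ p + 2 * q)]

/-- Verification of condition (H6) with `r = 3` and `V̂(x,x̄) = 8|x−x̄|³(x²+x̄²)` for the
SDDE with drift `x − 8x³` and diffusion `|y|^{3/2}`. -/
theorem stmt7 : ∀ β : ℝ, 0 < β → ∀ x xb y yb : ℝ,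
    |x - xb| * (2 * (x - xb) * ((x - 8 * x ^ 3) - (xb - 8 * xb ^ 3))
        + β * (|y| ^ ((3 : ℝ) / 2) - |yb| ^ ((3 : ℝ) / 2)) ^ 2)
      ≤ (2 + β ^ 3 / 3) * |x - xb| ^ 3 + (16 / 3) * |y - yb| ^ 3
        - 8 * |x - xb| ^ 3 * (x ^ 2 + xb ^ 2) + 8 * |y - yb| ^ 3 * (y ^ 2 + yb ^ 2) := by
  intro β hβ x xb y yb
  set X := |x - xb| with hXdef
  have hX0 : 0 ≤ X := abs_nonneg _
  have hX3 : X ^ 3 = X * (x - xb) ^ 2 := by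
    rw [hXdef, ← sq_abs (x - xb)]; ring
  -- drift part
  have key1 : X * (2 * (x - xb) * ((x - 8 * x ^ 3) - (xb - 8 * xb ^ 3)))
      = 2 * X ^ 3 - 8 * X ^ 3 * (x ^ 2 + xb ^ 2) - 8 * (X * ((x - xb) * (x + xb)) ^ 2) := by
    rw [hX3]; ring
  -- diffusion part
  set a := Real.sqrt |y| with hadef
  set b := Real.sqrt |yb| with hbdef
  have ha0 : 0 ≤ a := Real.sqrt_nonneg _
  have hb0 : 0 ≤ b := Real.sqrt_nonneg _
  have ha2 : a ^ 2 = |y| := Real.sq_sqrt (abs_nonneg y)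
  have hb2 : b ^ 2 = |yb| := Real.sq_sqrt (abs_nonneg yb)
  have hya : |y| ^ ((3 : ℝ) / 2) = a ^ 3 := rpow_three_halves _ (abs_nonneg y)
  have hyb : |yb| ^ ((3 : ℝ) / 2) = b ^ 3 := rpow_three_halves _ (abs_nonneg yb)
  set d := |y - yb| with hddef
  have hd0 : 0 ≤ d := abs_nonneg _
  have hab : |a ^ 2 - b ^ 2| ≤ d := by
    rw [ha2, hb2]; exact abs_abs_sub_abs_le_abs_sub y yb
  have ha4 : a ^ 4 = y ^ 2 := by
    have : a ^ 4 = (a ^ 2) ^ 2 := by ring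
    rw [this, ha2, sq_abs]
  have hb4 : b ^ 4 = yb ^ 2 := by
    have : b ^ 4 = (b ^ 2) ^ 2 := by ring
    rw [this, hb2, sq_abs]
  have hcube : (a ^ 3 - b ^ 3) ^ 2 * |a ^ 3 - b ^ 3| ≤ 8 * d ^ 3 * (1 + a ^ 4 + b ^ 4) := by
    rcases le_total b a with hba | hba
    · have h := cube_est a b d ha0 hb0 hd0 hba (le_trans (le_abs_self _) hab)
      have h0 : 0 ≤ a ^ 3 - b ^ 3 := by nlinarith [pow_le_pow_left₀ hb0 hba 3]
      rw [abs_of_nonneg h0]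
      calc (a ^ 3 - b ^ 3) ^ 2 * (a ^ 3 - b ^ 3) = (a ^ 3 - b ^ 3) ^ 3 := by ring
        _ ≤ _ := h
    · have hab' : b ^ 2 - a ^ 2 ≤ d := by
        have := neg_abs_le (a ^ 2 - b ^ 2); linarith [hab]
      have h := cube_est b a d hb0 ha0 hd0 hba hab'
      have h0 : 0 ≤ b ^ 3 - a ^ 3 := by nlinarith [pow_le_pow_left₀ ha0 hba 3]
      rw [show |a ^ 3 - b ^ 3| = b ^ 3 - a ^ 3 by
        rw [abs_sub_comm, abs_of_nonneg h0]]
      calc (a ^ 3 - b ^ 3) ^ 2 * (b ^ 3 - a ^ 3) = (b ^ 3 - a ^ 3) ^ 3 := by ring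
        _ ≤ 8 * d ^ 3 * (1 + b ^ 4 + a ^ 4) := h
        _ = 8 * d ^ 3 * (1 + a ^ 4 + b ^ 4) := by ring
  have hyoung : (β * X) * (a ^ 3 - b ^ 3) ^ 2
      ≤ (β * X) ^ 3 / 3 + 2 * ((a ^ 3 - b ^ 3) ^ 2 * |a ^ 3 - b ^ 3|) / 3 := by
    have := young_pq (β * X) |a ^ 3 - b ^ 3| (by positivity) (abs_nonneg _)
    have hq2 : |a ^ 3 - b ^ 3| ^ 2 = (a ^ 3 - b ^ 3) ^ 2 := sq_abs _
    have hq3 : |a ^ 3 - b ^ 3| ^ 3 = (a ^ 3 - b ^ 3) ^ 2 * |a ^ 3 - b ^ 3| := by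
      rw [pow_succ, hq2]
    rw [hq2, hq3] at this
    linarith
  have key2 : X * (β * (|y| ^ ((3 : ℝ) / 2) - |yb| ^ ((3 : ℝ) / 2)) ^ 2)
      ≤ β ^ 3 * X ^ 3 / 3 + (16 / 3) * d ^ 3 + (16 / 3) * (d ^ 3 * (y ^ 2 + yb ^ 2)) := by
    rw [hya, hyb]
    have h1 : (β * X) ^ 3 = β ^ 3 * X ^ 3 := by ring
    have h2 : 2 * (8 * d ^ 3 * (1 + a ^ 4 + b ^ 4)) / 3
        = (16 / 3) * d ^ 3 + (16 / 3) * (d ^ 3 * (y ^ 2 + yb ^ 2)) := by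
      rw [ha4, hb4]; ring
    calc X * (β * (a ^ 3 - b ^ 3) ^ 2) = (β * X) * (a ^ 3 - b ^ 3) ^ 2 := by ring
      _ ≤ (β * X) ^ 3 / 3 + 2 * ((a ^ 3 - b ^ 3) ^ 2 * |a ^ 3 - b ^ 3|) / 3 := hyoung
      _ ≤ (β * X) ^ 3 / 3 + 2 * (8 * d ^ 3 * (1 + a ^ 4 + b ^ 4)) / 3 := by linarith [hcube]
      _ = β ^ 3 * X ^ 3 / 3 + ((16 / 3) * d ^ 3 + (16 / 3) * (d ^ 3 * (y ^ 2 + yb ^ 2))) := by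
          rw [h1, h2]
      _ = _ := by ring
  have hsq : 0 ≤ X * ((x - xb) * (x + xb)) ^ 2 := by positivity
  have hd3yy : 0 ≤ d ^ 3 * (y ^ 2 + yb ^ 2) := by positivity
  rw [mul_add]
  linarith [key1, key2]
end

section
/- Assume f and g satisfy both condition (H5) with parameters α > 0, K₄ > 0 and condition (H6) with parameters r ≥ 2, β > r−1, K₅ > 0 and V̂. Let κ > 0 satisfy (1+κ)·(r−1) ≤ β. Then for all x, x̃, z, y, ỹ, w ∈ ℝ^d: |x−x̃|^{r−2}·( 2⟨x−x̃, f(x,y) − f(z,w)⟩ + (r−1)·|g(x,y) − g(z,w)|² ) ≤ K₅·(|x−x̃|^r + |y−ỹ|^r) − V̂(x,x̃) + V̂(y,ỹ) + 2K₄·|x−x̃|^{r−1}·(|x̃−z| + |ỹ−w|)·(1 + |x̃|^α + |ỹ|^α + |z|^α + |w|^α) + (1 + 1/κ)·(r−1)·K₄·|x−x̃|^{r−2}·(|x̃−z|² + |ỹ−w|²)·(1 + |x̃|^α + |ỹ|^α + |z|^α + |w|^α). -/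
open scoped RealInnerProductSpace

lemma frob_sq {n k : ℕ} (A : Matrix (Fin n) (Fin k) ℝ) :
    frobNorm A ^ 2 = ∑ i, ∑ j, (A i j) ^ 2 := by
  rw [frobNorm, Real.sq_sqrt]
  positivity

lemma frob_split {n k : ℕ} {κ : ℝ} (hκ : 0 < κ) (A B : Matrix (Fin n) (Fin k) ℝ) :
    frobNorm (A + B) ^ 2 ≤ (1 + κ) * frobNorm A ^ 2 + (1 + 1/κ) * frobNorm B ^ 2 := by
  rw [frob_sq, frob_sq, frob_sq]
  calc ∑ i, ∑ j, ((A + B) i j) ^ 2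
      = ∑ i, ∑ j, (A i j + B i j) ^ 2 := by simp [Matrix.add_apply]
    _ ≤ ∑ i, ∑ j, ((1 + κ) * (A i j) ^ 2 + (1 + 1/κ) * (B i j) ^ 2) := by
        apply Finset.sum_le_sum; intro i _
        apply Finset.sum_le_sum; intro j _
        have h1 : κ * (1/κ) = 1 := by field_simp
        nlinarith [sq_nonneg (κ * A i j - B i j), hκ, sq_nonneg (A i j), sq_nonneg (B i j)]
    _ = (1 + κ) * (∑ i, ∑ j, (A i j) ^ 2) + (1 + 1/κ) * (∑ i, ∑ j, (B i j) ^ 2) := by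
        simp [Finset.sum_add_distrib, Finset.mul_sum]

theorem stmt16 (d m : ℕ) (hd : 1 ≤ d) (hm : 1 ≤ m)
    (f : EuclideanSpace ℝ (Fin d) → EuclideanSpace ℝ (Fin d) → EuclideanSpace ℝ (Fin d))
    (g : EuclideanSpace ℝ (Fin d) → EuclideanSpace ℝ (Fin d) → Matrix (Fin d) (Fin m) ℝ)
    (α K₄ : ℝ) (hα : 0 < α) (hK₄ : 0 < K₄)
    (hH5f : ∀ x xb y yb : EuclideanSpace ℝ (Fin d),
      ‖f x y - f xb yb‖
        ≤ K₄ * (‖x - xb‖ + ‖y - yb‖)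
            * (1 + ‖x‖ ^ α + ‖xb‖ ^ α + ‖y‖ ^ α + ‖yb‖ ^ α))
    (hH5g : ∀ x xb y yb : EuclideanSpace ℝ (Fin d),
      frobNorm (g x y - g xb yb) ^ 2
        ≤ K₄ * (‖x - xb‖ ^ 2 + ‖y - yb‖ ^ 2)
            * (1 + ‖x‖ ^ α + ‖xb‖ ^ α + ‖y‖ ^ α + ‖yb‖ ^ α))
    (r β K₅ : ℝ) (hr : 2 ≤ r) (hβ : r - 1 < β) (hK₅ : 0 < K₅)
    (Vhat : EuclideanSpace ℝ (Fin d) → EuclideanSpace ℝ (Fin d) → ℝ)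
    (hVhat : ∀ x xb, 0 ≤ Vhat x xb)
    (hH6 : ∀ x xb y yb : EuclideanSpace ℝ (Fin d),
      ‖x - xb‖ ^ (r - 2) * (2 * ⟪x - xb, f x y - f xb yb⟫
          + β * frobNorm (g x y - g xb yb) ^ 2)
        ≤ K₅ * (‖x - xb‖ ^ r + ‖y - yb‖ ^ r) - Vhat x xb + Vhat y yb)
    (κ : ℝ) (hκ : 0 < κ) (hκβ : (1 + κ) * (r - 1) ≤ β) :
    ∀ x xt z y yt w : EuclideanSpace ℝ (Fin d),
      ‖x - xt‖ ^ (r - 2) * (2 * ⟪x - xt, f x y - f z w⟫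
          + (r - 1) * frobNorm (g x y - g z w) ^ 2)
        ≤ K₅ * (‖x - xt‖ ^ r + ‖y - yt‖ ^ r) - Vhat x xt + Vhat y yt
          + 2 * K₄ * ‖x - xt‖ ^ (r - 1) * (‖xt - z‖ + ‖yt - w‖)
              * (1 + ‖xt‖ ^ α + ‖yt‖ ^ α + ‖z‖ ^ α + ‖w‖ ^ α)
          + (1 + 1 / κ) * (r - 1) * K₄ * ‖x - xt‖ ^ (r - 2)
              * (‖xt - z‖ ^ 2 + ‖yt - w‖ ^ 2)
              * (1 + ‖xt‖ ^ α + ‖yt‖ ^ α + ‖z‖ ^ α + ‖w‖ ^ α) := by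
  intro x xt z y yt w
  set n2 : ℝ := ‖x - xt‖ ^ (r - 2) with hn2def
  have hn2 : 0 ≤ n2 := Real.rpow_nonneg (norm_nonneg _) _
  have hr1 : (0:ℝ) ≤ r - 1 := by linarith
  have hκ' : (0:ℝ) ≤ 1 + 1/κ := by positivity
  -- decompositions
  have hfd : f x y - f z w = (f x y - f xt yt) + (f xt yt - f z w) := by abel
  have hgd : g x y - g z w = (g x y - g xt yt) + (g xt yt - g z w) := by abel
  set iA : ℝ := ⟪x - xt, f x y - f xt yt⟫ with hiAdef
  set iB : ℝ := ⟪x - xt, f xt yt - f z w⟫ with hiBdef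
  have hinner : ⟪x - xt, f x y - f z w⟫ = iA + iB := by
    rw [hfd]; exact inner_add_right _ _ _
  set fa : ℝ := frobNorm (g x y - g xt yt) ^ 2
  set fb : ℝ := frobNorm (g xt yt - g z w) ^ 2
  have hfa : 0 ≤ fa := sq_nonneg _
  have hfb : 0 ≤ fb := sq_nonneg _
  have hgsplit : (r - 1) * frobNorm (g x y - g z w) ^ 2
      ≤ β * fa + (1 + 1/κ) * (r - 1) * fb := by
    have h1 : frobNorm (g x y - g z w) ^ 2 ≤ (1 + κ) * fa + (1 + 1/κ) * fb := by
      rw [hgd]; exact frob_split hκ _ _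
    nlinarith [mul_le_mul_of_nonneg_left h1 hr1]
  -- main split
  have hmain : n2 * (2 * ⟪x - xt, f x y - f z w⟫
        + (r - 1) * frobNorm (g x y - g z w) ^ 2)
      ≤ n2 * (2 * iA + β * fa) + n2 * (2 * iB + (1 + 1/κ) * (r - 1) * fb) := by
    rw [← mul_add]
    apply mul_le_mul_of_nonneg_left _ hn2
    rw [hinner]
    linarith [hgsplit]
  -- first piece: H6
  have hT1 : n2 * (2 * iA + β * fa) ≤ K₅ * (‖x - xt‖ ^ r + ‖y - yt‖ ^ r)
      - Vhat x xt + Vhat y yt := hH6 x xt y yt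
  -- power identity
  have hpow : n2 * ‖x - xt‖ = ‖x - xt‖ ^ (r - 1) := by
    rcases eq_or_lt_of_le (norm_nonneg (x - xt)) with h0 | h0
    · rw [hn2def, ← h0, Real.zero_rpow (by linarith : r - 1 ≠ 0), mul_zero]
    · rw [hn2def]
      rw [show r - 1 = (r - 2) + 1 by ring, Real.rpow_add h0, Real.rpow_one]
  -- second piece: drift
  have hT2 : n2 * (2 * iB)
      ≤ 2 * K₄ * ‖x - xt‖ ^ (r - 1) * (‖xt - z‖ + ‖yt - w‖)
          * (1 + ‖xt‖ ^ α + ‖yt‖ ^ α + ‖z‖ ^ α + ‖w‖ ^ α) := by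
    have h1 : iB ≤ ‖x - xt‖ * ‖f xt yt - f z w‖ := real_inner_le_norm _ _
    have h2 := hH5f xt z yt w
    have h3 : n2 * (2 * iB) ≤ n2 * (2 * (‖x - xt‖ * ‖f xt yt - f z w‖)) := by
      apply mul_le_mul_of_nonneg_left _ hn2; linarith
    have h4 : n2 * (2 * (‖x - xt‖ * ‖f xt yt - f z w‖))
        = 2 * ‖x - xt‖ ^ (r - 1) * ‖f xt yt - f z w‖ := by
      rw [← hpow]; ring
    have h5 : 2 * ‖x - xt‖ ^ (r - 1) * ‖f xt yt - f z w‖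
        ≤ 2 * ‖x - xt‖ ^ (r - 1)
            * (K₄ * (‖xt - z‖ + ‖yt - w‖)
                * (1 + ‖xt‖ ^ α + ‖z‖ ^ α + ‖yt‖ ^ α + ‖w‖ ^ α)) := by
      apply mul_le_mul_of_nonneg_left h2
      positivity
    calc n2 * (2 * iB) ≤ 2 * ‖x - xt‖ ^ (r - 1) * ‖f xt yt - f z w‖ := by
          rw [← h4]; exact h3
      _ ≤ _ := by
          refine h5.trans_eq ?_
          ring
  -- third piece: diffusion
  have hT3 : n2 * ((1 + 1/κ) * (r - 1) * fb)
      ≤ (1 + 1 / κ) * (r - 1) * K₄ * n2 * (‖xt - z‖ ^ 2 + ‖yt - w‖ ^ 2)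
          * (1 + ‖xt‖ ^ α + ‖yt‖ ^ α + ‖z‖ ^ α + ‖w‖ ^ α) := by
    have h2 := hH5g xt z yt w
    have hc : 0 ≤ (1 + 1/κ) * (r - 1) * n2 := by positivity
    calc n2 * ((1 + 1/κ) * (r - 1) * fb)
        = (1 + 1/κ) * (r - 1) * n2 * fb := by ring
      _ ≤ (1 + 1/κ) * (r - 1) * n2
            * (K₄ * (‖xt - z‖ ^ 2 + ‖yt - w‖ ^ 2)
                * (1 + ‖xt‖ ^ α + ‖z‖ ^ α + ‖yt‖ ^ α + ‖w‖ ^ α)) :=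
          mul_le_mul_of_nonneg_left h2 hc
      _ = _ := by ring
  have hT2' : n2 * (2 * iB + (1 + 1/κ) * (r - 1) * fb)
      = n2 * (2 * iB) + n2 * ((1 + 1/κ) * (r - 1) * fb) := by ring
  linarith [hmain, hT1, hT2, hT3]
end
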